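/- arXiv:1704.05515 — 2 statements merged into one kernel-verified Lean document; each statement's English description precedes it below -/
import Mathlib

section
/- Let 1 → R → F → G → 1 be a presentation of a group G, where F is a free group on a finite set and R is a normal subgroup of F. Then the torsion subgroup of the abelian group R/[R,F] is isomorphic to the torsion subgroup of H₂(G, ℤ). -/
/-!
STATEMENT 1: For a finite-type presentation `1 → R → F → G → 1`, the torsion
subgroup of `R/[R,F]` is isomorphic to the torsion subgroup of `H₂(G,ℤ)`
(the latter defined by Hopf's formula for the canonical presentation of `G`).
-/

/-- The subgroup `[ker π, F]` of the free group `F`. -/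
def relComm {X G : Type} [Group G] (π : FreeGroup X →* G) : Subgroup (FreeGroup X) :=
  ⁅π.ker, (⊤ : Subgroup (FreeGroup X))⁆

instance {X G : Type} [Group G] (π : FreeGroup X →* G) : (relComm π).Normal :=
  Subgroup.commutator_normal _ _

/-- `R/[R,F]`, realized as the image of `R = ker π` in `F/[R,F]`. -/
def relCoinv {X G : Type} [Group G] (π : FreeGroup X →* G) :
    Subgroup (FreeGroup X ⧸ relComm π) :=
  Subgroup.map (QuotientGroup.mk' (relComm π)) π.ker

/-- The kernel of the canonical presentation `FreeGroup G → G`. -/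
def hopfKer (G : Type) [Group G] : Subgroup (FreeGroup G) :=
  (FreeGroup.lift (id : G → G)).ker

/-- `H₂(G, ℤ)` via Hopf's formula `(K ∩ [F,F]) / [K,F]` for the canonical
presentation `FreeGroup G → G`. -/
def H2Z (G : Type) [Group G] :
    Subgroup (FreeGroup G ⧸ relComm (FreeGroup.lift (id : G → G))) :=
  Subgroup.map (QuotientGroup.mk' (relComm (FreeGroup.lift (id : G → G))))
    (hopfKer G ⊓ commutator (FreeGroup G))

section CommInstances

open scoped commutatorElement

variable {F : Type} [Group F]

theorem comm_of_map (N L : Subgroup F) [N.Normal]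
    (h : ∀ a ∈ L, ∀ b ∈ L, ⁅a, b⁆ ∈ N)
    (x y : ↥(L.map (QuotientGroup.mk' N))) : x * y = y * x := by
  obtain ⟨x, hx⟩ := x
  obtain ⟨y, hy⟩ := y
  obtain ⟨a, ha, rfl⟩ := hx
  obtain ⟨b, hb, rfl⟩ := hy
  apply Subtype.ext
  show QuotientGroup.mk' N a * QuotientGroup.mk' N b
      = QuotientGroup.mk' N b * QuotientGroup.mk' N a
  rw [← map_mul, ← map_mul, QuotientGroup.mk'_eq_mk']
  refine ⟨⁅b⁻¹, a⁻¹⁆, h _ (inv_mem hb) _ (inv_mem ha), ?_⟩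
  simp only [commutatorElement_def]
  group

/-- `R/[R,F]` is an abelian group. -/
instance {X G : Type} [Group G] (π : FreeGroup X →* G) : CommGroup ↥(relCoinv π) :=
  { (inferInstance : Group ↥(relCoinv π)) with
    mul_comm := comm_of_map (relComm π) π.ker
      (fun a ha b _ => Subgroup.commutator_mem_commutator ha (Subgroup.mem_top b)) }

/-- `H₂(G,ℤ)` is an abelian group. -/
instance (G : Type) [Group G] : CommGroup ↥(H2Z G) :=
  { (inferInstance : Group ↥(H2Z G)) with
    mul_comm := comm_of_map _ _
      (fun a ha b _ => Subgroup.commutator_mem_commutator ha.1 (Subgroup.mem_top b)) }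

end CommInstances


section HopfProof

open QuotientGroup

open scoped commutatorElement

variable {G : Type} [Group G]

/-- Hopf's `H₂` for an arbitrary presentation `π`. -/
def hopfH2 {X : Type} (π : FreeGroup X →* G) : Subgroup (FreeGroup X ⧸ relComm π) :=
  Subgroup.map (QuotientGroup.mk' (relComm π)) (π.ker ⊓ commutator (FreeGroup X))

instance {X : Type} (π : FreeGroup X →* G) : CommGroup ↥(hopfH2 π) :=
  { (inferInstance : Group ↥(hopfH2 π)) with
    mul_comm := comm_of_map _ _
      (fun a ha b _ => Subgroup.commutator_mem_commutator ha.1 (Subgroup.mem_top b)) }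

theorem hopfH2_le_relCoinv {X : Type} (π : FreeGroup X →* G) : hopfH2 π ≤ relCoinv π :=
  Subgroup.map_mono inf_le_left

theorem relComm_le_commutator {X : Type} (π : FreeGroup X →* G) :
    relComm π ≤ commutator (FreeGroup X) :=
  Subgroup.commutator_mono le_top le_top

/-- The abelianization of a free group is torsion-free. -/
theorem mem_commutator_of_pow {X : Type} {x : FreeGroup X} {n : ℕ} (hn : n ≠ 0)
    (h : x ^ n ∈ commutator (FreeGroup X)) : x ∈ commutator (FreeGroup X) := by
  have h1 : (Abelianization.of x) ^ n = 1 := by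
    rw [← map_pow]
    exact (QuotientGroup.eq_one_iff _).mpr h
  set v : FreeAbelianGroup X := Additive.ofMul (Abelianization.of x) with hv
  have h2 : n • FreeAbelianGroup.toFinsupp (X := X) v = 0 := by
    rw [← map_nsmul]
    have h' : n • v = 0 := (ofMul_pow n (Abelianization.of x)).symm.trans (congrArg Additive.ofMul h1)
    rw [h', map_zero]
  have h3 : FreeAbelianGroup.toFinsupp (X := X) v = 0 := by
    ext a
    have := congrArg (fun f => f a) h2
    simp only [Finsupp.smul_apply, Finsupp.coe_zero, Pi.zero_apply, smul_eq_mul] at this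
    have : (n : ℤ) * FreeAbelianGroup.toFinsupp (X := X) v a = 0 := by
      simpa using this
    rcases mul_eq_zero.mp this with h | h
    · exact absurd (by exact_mod_cast h) (by exact_mod_cast hn)
    · simpa using h
  have h4 : v = 0 := by
    have := Finsupp.toFreeAbelianGroup_toFinsupp (X := X) v
    rw [h3, map_zero] at this
    exact this.symm
  have h5 : Abelianization.of x = 1 := h4
  exact (QuotientGroup.eq_one_iff x).mp h5

variable {X Y : Type} (π₁ : FreeGroup X →* G) (π₂ : FreeGroup Y →* G)

theorem ker_map_le (φ : FreeGroup X →* FreeGroup Y) (h : π₂.comp φ = π₁)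
    {x : FreeGroup X} (hx : x ∈ π₁.ker) : φ x ∈ π₂.ker := by
  rw [MonoidHom.mem_ker, ← MonoidHom.comp_apply, h]
  exact hx

theorem commutator_map_le (φ : FreeGroup X →* FreeGroup Y)
    {x : FreeGroup X} (hx : x ∈ commutator (FreeGroup X)) :
    φ x ∈ commutator (FreeGroup Y) := by
  have h1 : φ x ∈ Subgroup.map φ (commutator (FreeGroup X)) := ⟨x, hx, rfl⟩
  have h2 : Subgroup.map φ (commutator (FreeGroup X)) ≤ commutator (FreeGroup Y) := by
    rw [commutator_def, Subgroup.map_commutator]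
    exact Subgroup.commutator_mono le_top le_top
  exact h2 h1

theorem relComm_comap (φ : FreeGroup X →* FreeGroup Y) (h : π₂.comp φ = π₁) :
    relComm π₁ ≤ (relComm π₂).comap φ := by
  rw [← Subgroup.map_le_iff_le_comap, relComm, Subgroup.map_commutator]
  apply Subgroup.commutator_mono _ le_top
  rintro y ⟨x, hx, rfl⟩
  exact ker_map_le π₁ π₂ φ h hx

/-- The map induced by a lift `φ` on the quotients `F/[R,F]`. -/
def qmap (φ : FreeGroup X →* FreeGroup Y) (h : π₂.comp φ = π₁) :
    (FreeGroup X ⧸ relComm π₁) →* FreeGroup Y ⧸ relComm π₂ :=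
  QuotientGroup.map _ _ φ (relComm_comap π₁ π₂ φ h)

theorem qmap_mk (φ : FreeGroup X →* FreeGroup Y) (h : π₂.comp φ = π₁) (x : FreeGroup X) :
    qmap π₁ π₂ φ h (QuotientGroup.mk' (relComm π₁) x) = QuotientGroup.mk' (relComm π₂) (φ x) :=
  rfl

theorem qmap_mem_hopf (φ : FreeGroup X →* FreeGroup Y) (h : π₂.comp φ = π₁)
    {q : FreeGroup X ⧸ relComm π₁} (hq : q ∈ hopfH2 π₁) :
    qmap π₁ π₂ φ h q ∈ hopfH2 π₂ := by
  obtain ⟨r, ⟨hr1, hr2⟩, rfl⟩ := hq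
  exact ⟨φ r, ⟨ker_map_le π₁ π₂ φ h hr1, commutator_map_le φ hr2⟩, rfl⟩

theorem central_mk {s : FreeGroup Y} (hs : s ∈ π₂.ker) (q : FreeGroup Y ⧸ relComm π₂) :
    (QuotientGroup.mk' (relComm π₂)) s * q = q * (QuotientGroup.mk' (relComm π₂)) s := by
  induction q using QuotientGroup.induction_on with
  | _ g =>
    show ((s * g : FreeGroup Y) : FreeGroup Y ⧸ relComm π₂) = ((g * s : FreeGroup Y) : _)
    rw [QuotientGroup.eq]
    have : (s * g)⁻¹ * (g * s) = ⁅s⁻¹, g⁻¹⁆⁻¹ := by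
      simp only [commutatorElement_def]
      group
    rw [this]
    exact inv_mem (Subgroup.commutator_mem_commutator (inv_mem hs) (Subgroup.mem_top _))

/-- Two lifts of the same map agree, modulo `[R₂,F₂]`, on the commutator subgroup. -/
theorem lift_congr_comm (φ φ' : FreeGroup X →* FreeGroup Y)
    (h : π₂.comp φ = π₁) (h' : π₂.comp φ' = π₁) :
    ∀ r ∈ commutator (FreeGroup X),
      (QuotientGroup.mk' (relComm π₂)) (φ r) = (QuotientGroup.mk' (relComm π₂)) (φ' r) := by
  set mk₂ := QuotientGroup.mk' (relComm π₂) with hmk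
  have hker : ∀ x : FreeGroup X, φ x * (φ' x)⁻¹ ∈ π₂.ker := by
    intro x
    rw [MonoidHom.mem_ker, map_mul, map_inv, ← MonoidHom.comp_apply, ← MonoidHom.comp_apply,
      h, h', mul_inv_cancel]
  have central : ∀ (x : FreeGroup X) (q : FreeGroup Y ⧸ relComm π₂),
      (mk₂ (φ x) * (mk₂ (φ' x))⁻¹) * q = q * (mk₂ (φ x) * (mk₂ (φ' x))⁻¹) := by
    intro x q
    have := central_mk π₂ (hker x) q
    rwa [map_mul, map_inv] at this
  let d : FreeGroup X →* FreeGroup Y ⧸ relComm π₂ :=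
  { toFun := fun x => mk₂ (φ x) * (mk₂ (φ' x))⁻¹
    map_one' := by simp
    map_mul' := fun a b => by
      have key := central b ((mk₂ (φ' a))⁻¹)
      simp only [map_mul, mul_inv_rev]
      calc mk₂ (φ a) * mk₂ (φ b) * ((mk₂ (φ' b))⁻¹ * (mk₂ (φ' a))⁻¹)
          = mk₂ (φ a) * ((mk₂ (φ b) * (mk₂ (φ' b))⁻¹) * (mk₂ (φ' a))⁻¹) := by group
        _ = mk₂ (φ a) * ((mk₂ (φ' a))⁻¹ * (mk₂ (φ b) * (mk₂ (φ' b))⁻¹)) := by rw [key]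
        _ = mk₂ (φ a) * (mk₂ (φ' a))⁻¹ * (mk₂ (φ b) * (mk₂ (φ' b))⁻¹) := by group }
  have hcomm : commutator (FreeGroup X) ≤ d.ker := by
    rw [commutator_def, Subgroup.commutator_le]
    intro g₁ _ g₂ _
    rw [MonoidHom.mem_ker, map_commutatorElement]
    rw [commutatorElement_eq_one_iff_mul_comm]
    exact central g₁ (d g₂)
  intro r hr
  have : d r = 1 := hcomm hr
  have : mk₂ (φ r) * (mk₂ (φ' r))⁻¹ = 1 := this
  exact mul_inv_eq_one.mp this

/-- The map induced by a lift on Hopf `H₂`. -/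
def hmap (φ : FreeGroup X →* FreeGroup Y) (h : π₂.comp φ = π₁) :
    ↥(hopfH2 π₁) →* ↥(hopfH2 π₂) :=
  ((qmap π₁ π₂ φ h).comp (hopfH2 π₁).subtype).codRestrict _
    (fun x => qmap_mem_hopf π₁ π₂ φ h x.2)

theorem hmap_hmap (φ : FreeGroup X →* FreeGroup Y) (hφ : π₂.comp φ = π₁)
    (ψ : FreeGroup Y →* FreeGroup X) (hψ : π₁.comp ψ = π₂) (x : ↥(hopfH2 π₁)) :
    hmap π₂ π₁ ψ hψ (hmap π₁ π₂ φ hφ x) = x := by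
  obtain ⟨q, hq⟩ := x
  obtain ⟨r, hr, rfl⟩ := hq
  apply Subtype.ext
  show qmap π₂ π₁ ψ hψ (qmap π₁ π₂ φ hφ (QuotientGroup.mk' (relComm π₁) r))
      = QuotientGroup.mk' (relComm π₁) r
  rw [qmap_mk, qmap_mk]
  have hcomp : π₁.comp (ψ.comp φ) = π₁ := by
    rw [← MonoidHom.comp_assoc, hψ, hφ]
  have := lift_congr_comm π₁ π₁ (ψ.comp φ) (MonoidHom.id _) hcomp (MonoidHom.comp_id π₁) r hr.2
  simpa using this

/-- Lifts in both directions give an isomorphism of Hopf `H₂`'s. -/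
def hopfEquiv (φ : FreeGroup X →* FreeGroup Y) (hφ : π₂.comp φ = π₁)
    (ψ : FreeGroup Y →* FreeGroup X) (hψ : π₁.comp ψ = π₂) :
    ↥(hopfH2 π₁) ≃* ↥(hopfH2 π₂) :=
  { toFun := hmap π₁ π₂ φ hφ
    invFun := hmap π₂ π₁ ψ hψ
    left_inv := hmap_hmap π₁ π₂ φ hφ ψ hψ
    right_inv := hmap_hmap π₂ π₁ ψ hψ φ hφ
    map_mul' := map_mul _ }

/-- Torsion subgroups are preserved by isomorphisms. -/
def torsionCongr {A B : Type} [CommGroup A] [CommGroup B] (e : A ≃* B) :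
    ↥(CommGroup.torsion A) ≃* ↥(CommGroup.torsion B) :=
  { toFun := fun x => ⟨e x.1, e.toMonoidHom.isOfFinOrder x.2⟩
    invFun := fun y => ⟨e.symm y.1, e.symm.toMonoidHom.isOfFinOrder y.2⟩
    left_inv := fun x => Subtype.ext (e.symm_apply_apply x.1)
    right_inv := fun y => Subtype.ext (e.apply_symm_apply y.1)
    map_mul' := fun x y => Subtype.ext (map_mul e x.1 y.1) }

/-- The torsion of `R/[R,F]` equals the torsion of Hopf `H₂`. -/
noncomputable def torsionRelCoinvEquiv (π : FreeGroup X →* G) :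
    ↥(CommGroup.torsion ↥(relCoinv π)) ≃* ↥(CommGroup.torsion ↥(hopfH2 π)) := by
  have hle := hopfH2_le_relCoinv π
  let ι : ↥(hopfH2 π) →* ↥(relCoinv π) := Subgroup.inclusion hle
  let t : ↥(CommGroup.torsion ↥(hopfH2 π)) →* ↥(CommGroup.torsion ↥(relCoinv π)) :=
    (ι.comp (CommGroup.torsion ↥(hopfH2 π)).subtype).codRestrict _
      (fun x => ι.isOfFinOrder x.2)
  have hbij : Function.Bijective t := by
    constructor
    · intro a b hab
      apply Subtype.ext
      apply Subgroup.inclusion_injective hle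
      exact Subtype.ext_iff.mp hab
    · rintro ⟨⟨q, hq⟩, hfin⟩
      obtain ⟨r, hr, rfl⟩ := hq
      obtain ⟨n, hn, hpow⟩ := isOfFinOrder_iff_pow_eq_one.mp hfin
      have hq1 : (QuotientGroup.mk' (relComm π) r) ^ n = 1 := by
        have := congrArg (Subtype.val) hpow
        exact this
      have hrn : r ^ n ∈ relComm π := by
        rw [← QuotientGroup.eq_one_iff]
        rw [← map_pow] at hq1
        exact hq1
      have hrc : r ∈ commutator (FreeGroup X) :=
        mem_commutator_of_pow hn.ne' (relComm_le_commutator π hrn)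
      have hmem : QuotientGroup.mk' (relComm π) r ∈ hopfH2 π := ⟨r, ⟨hr, hrc⟩, rfl⟩
      refine ⟨⟨⟨QuotientGroup.mk' (relComm π) r, hmem⟩, ?_⟩, ?_⟩
      · apply isOfFinOrder_iff_pow_eq_one.mpr
        exact ⟨n, hn, Subtype.ext hq1⟩
      · apply Subtype.ext
        apply Subtype.ext
        rfl
  exact (MulEquiv.ofBijective t hbij).symm

end HopfProof

theorem torsion_relCoinv_iso_torsion_H2
    {X G : Type} [Finite X] [Group G] (π : FreeGroup X →* G)
    (hπ : Function.Surjective π) :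
    Nonempty (↥(CommGroup.torsion ↥(relCoinv π)) ≃* ↥(CommGroup.torsion ↥(H2Z G))) := by
  classical
  set π₀ : FreeGroup G →* G := FreeGroup.lift (id : G → G) with hπ₀
  let φ : FreeGroup X →* FreeGroup G :=
    FreeGroup.lift (fun x => FreeGroup.of (π (FreeGroup.of x)))
  have hφ : π₀.comp φ = π := by
    apply FreeGroup.ext_hom
    intro x
    simp [φ, π₀, FreeGroup.lift_apply_of]
  let ψ : FreeGroup G →* FreeGroup X :=
    FreeGroup.lift (fun g => Function.surjInv hπ g)
  have hψ : π.comp ψ = π₀ := by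
    apply FreeGroup.ext_hom
    intro g
    simp [ψ, π₀, FreeGroup.lift_apply_of, Function.surjInv_eq hπ]
  have e1 := torsionRelCoinvEquiv π
  have e2 : ↥(hopfH2 π) ≃* ↥(H2Z G) := hopfEquiv π π₀ φ hφ ψ hψ
  exact ⟨e1.trans (torsionCongr e2)⟩
end

section
/- (Crowell–Lyndon exact sequence) Let 1 → R → F → G → 1 be a presentation of a group G with F a free group on a finite set X and R a normal subgroup of F. Let R̄ = R/[R,R] be the relation module, regarded as a ℤ[G]-module via the conjugation action of F on R (which factors through G on R̄). Then there is an exact sequence of ℤ[G]-modules 0 → R̄ → ℤ[G]^{(X)} → IG → 0, where ℤ[G]^{(X)} is the free ℤ[G]-module on X, IG is the augmentation ideal of the group ring ℤ[G], the map ℤ[G]^{(X)} → IG sends the basis element corresponding to x ∈ X to π(x) − 1, and the map R̄ → ℤ[G]^{(X)} is induced by free differential calculus. -/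
/-!
STATEMENT 6 (Crowell–Lyndon exact sequence): for a finite-type presentation
`1 → R → F → G → 1` (`F` free on a finite set `X`, `R = ker π`), there is an
exact sequence of `ℤ[G]`-modules `0 → R̄ → ℤ[G]^(X) → IG → 0`, where
`R̄ = R/[R,R]` is the relation module (with `G` acting through conjugation of
`F` on `R`), the map `ℤ[G]^(X) → IG ⊆ ℤ[G]` sends the basis element `e_x` to
`π(x) - 1`, and `R̄ → ℤ[G]^(X)` is given by free differential (Fox) calculus.
-/

variable {X G : Type} [Group G]

/-- Functoriality of abelianization on automorphisms. -/
def abAut {H : Type} [Group H] : MulAut H →* MulAut (Abelianization H) where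
  toFun e := e.abelianizationCongr
  map_one' := by
    ext x
    induction x using QuotientGroup.induction_on with
    | _ z => rfl
  map_mul' e₁ e₂ := by
    ext x
    induction x using QuotientGroup.induction_on with
    | _ z => rfl

/-- The action of `F` on the abelianization of `R = ker π`, induced by conjugation. -/
def actF (π : FreeGroup X →* G) : FreeGroup X →* MulAut (Abelianization ↥π.ker) :=
  abAut.comp MulAut.conjNormal

theorem ker_le_ker_actF (π : FreeGroup X →* G) : π.ker ≤ (actF π).ker := by
  intro f hf
  rw [MonoidHom.mem_ker]
  ext x
  induction x using QuotientGroup.induction_on with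
  | _ z =>
    show Abelianization.of (MulAut.conjNormal f z) = Abelianization.of z
    have hz : MulAut.conjNormal f z = ⟨f, hf⟩ * z * ⟨f, hf⟩⁻¹ := by
      apply Subtype.ext
      simp [MulAut.conjNormal_apply]
    rw [hz, map_mul, map_mul, map_inv, mul_right_comm]
    simp

/-- The conjugation action of `G` on the relation module. -/
noncomputable def actG (π : FreeGroup X →* G) (hπ : Function.Surjective π) :
    G →* MulAut (Abelianization ↥π.ker) :=
  (π.liftOfRightInverse (Function.surjInv hπ) (Function.rightInverse_surjInv hπ))
    ⟨actF π, ker_le_ker_actF π⟩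

/-- The relation module `R̄ = R/[R,R]` of the presentation `π`, as a
representation of `G` over `ℤ`; `g` acts by `g • r[R,R] = (f r f⁻¹)[R,R]`
for any lift `f ∈ F` of `g`. -/
noncomputable def relRep (π : FreeGroup X →* G) (hπ : Function.Surjective π) :
    Representation ℤ G (Additive (Abelianization ↥π.ker)) where
  toFun g := ((MonoidHom.toAdditive (actG π hπ g).toMonoidHom)).toIntLinearMap
  map_one' := by
    ext x
    show (MonoidHom.toAdditive (MulEquiv.toMonoidHom ((actG π hπ) 1))).toIntLinearMap x = x
    rw [map_one]
    rfl
  map_mul' g₁ g₂ := by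
    ext x
    show (MonoidHom.toAdditive (MulEquiv.toMonoidHom ((actG π hπ) (g₁ * g₂)))).toIntLinearMap x
        = (MonoidHom.toAdditive (MulEquiv.toMonoidHom ((actG π hπ) g₁))).toIntLinearMap
            ((MonoidHom.toAdditive (MulEquiv.toMonoidHom ((actG π hπ) g₂))).toIntLinearMap x)
    rw [map_mul]
    rfl

/-- The augmentation `ℤ[G] → ℤ`. -/
noncomputable def aug (G : Type) [Group G] : MonoidAlgebra ℤ G →ₐ[ℤ] ℤ :=
  MonoidAlgebra.lift ℤ ℤ G 1

/-- The map `ℤ[G]^(X) → ℤ[G]`, `e_x ↦ π(x) - 1`; its image is the augmentation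
ideal `IG` and its kernel is the image of the relation module. -/
noncomputable def dMap (π : FreeGroup X →* G) :
    (X →₀ MonoidAlgebra ℤ G) →ₗ[MonoidAlgebra ℤ G] MonoidAlgebra ℤ G :=
  Finsupp.linearCombination (MonoidAlgebra ℤ G)
    fun x => (MonoidAlgebra.of ℤ G (π (FreeGroup.of x)) : MonoidAlgebra ℤ G) - 1

section CrowellLyndonAux

variable (π : FreeGroup X →* G)

/-- Multiplication by `MonoidAlgebra.of ℤ G g` as an automorphism of the
(multiplicative version of the) free module `ℤ[G]^(X)`. -/
noncomputable def clAut : G →* MulAut (Multiplicative (X →₀ MonoidAlgebra ℤ G)) where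
  toFun g :=
    { toFun := fun m => Multiplicative.ofAdd ((MonoidAlgebra.of ℤ G g) • m.toAdd)
      invFun := fun m => Multiplicative.ofAdd ((MonoidAlgebra.of ℤ G g⁻¹) • m.toAdd)
      left_inv := fun m => by
        simp [smul_smul, ← map_mul, ← MonoidAlgebra.one_def]
      right_inv := fun m => by
        simp [smul_smul, ← map_mul, ← MonoidAlgebra.one_def]
      map_mul' := fun m₁ m₂ => by
        simp [smul_add, ← ofAdd_add] }
  map_one' := by
    ext m
    simp [← MonoidAlgebra.one_def]
  map_mul' g₁ g₂ := by
    ext m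
    simp [smul_smul, ← map_mul]

/-- The homomorphism `F → ℤ[G]^(X) ⋊ G` defining the Fox derivative. -/
noncomputable def foxHom :
    FreeGroup X →* (Multiplicative (X →₀ MonoidAlgebra ℤ G)) ⋊[clAut (G := G) (X := X)] G :=
  FreeGroup.lift fun x =>
    ⟨Multiplicative.ofAdd (Finsupp.single x (1 : MonoidAlgebra ℤ G)), π (FreeGroup.of x)⟩

/-- The (total) Fox derivative of an element of the free group. -/
noncomputable def foxD (f : FreeGroup X) : X →₀ MonoidAlgebra ℤ G :=
  Multiplicative.toAdd (foxHom π f).left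

lemma foxHom_right (f : FreeGroup X) : (foxHom π f).right = π f := by
  have h : (SemidirectProduct.rightHom.comp (foxHom π)) = π := by
    apply FreeGroup.ext_hom
    intro x
    simp [foxHom]
  exact DFunLike.congr_fun h f

lemma foxD_of (x : X) : foxD π (FreeGroup.of x) = Finsupp.single x 1 := by
  simp [foxD, foxHom]

lemma foxD_one : foxD π 1 = 0 := by
  simp [foxD]

lemma foxD_mul (u v : FreeGroup X) :
    foxD π (u * v) = foxD π u + MonoidAlgebra.of ℤ G (π u) • foxD π v := by
  unfold foxD
  rw [map_mul, SemidirectProduct.mul_left, foxHom_right]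
  simp [clAut]

lemma foxD_inv (u : FreeGroup X) :
    foxD π u⁻¹ = -(MonoidAlgebra.of ℤ G (π u)⁻¹ • foxD π u) := by
  unfold foxD
  rw [map_inv, SemidirectProduct.inv_left, foxHom_right]
  simp [clAut, smul_neg]

lemma foxD_conj (u w : FreeGroup X) (hw : w ∈ π.ker) :
    foxD π (u * w * u⁻¹) = MonoidAlgebra.of ℤ G (π u) • foxD π w := by
  have h1 : π w = 1 := hw
  rw [foxD_mul, foxD_mul, foxD_inv, map_mul, h1, mul_one]
  simp only [smul_smul, ← map_mul, mul_inv_cancel, map_one, one_smul, smul_neg]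
  abel

lemma dMap_foxD (f : FreeGroup X) :
    dMap π (foxD π f) = MonoidAlgebra.of ℤ G (π f) - 1 := by
  induction f using FreeGroup.induction_on with
  | C1 => simp [foxD_one, ← MonoidAlgebra.one_def]
  | of x =>
    simp [foxD_of, dMap, Finsupp.linearCombination_single]
  | inv_of x ih =>
    rw [foxD_inv, map_neg, map_smul, ih]
    simp [mul_sub, ← map_mul, ← MonoidAlgebra.one_def]
  | mul u v ihu ihv =>
    rw [foxD_mul, map_add, map_smul, ihu, ihv, smul_eq_mul, mul_sub, mul_one, map_mul, map_mul]
    abel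

end CrowellLyndonAux


section CrowellLyndonAux2

variable (π : FreeGroup X →* G) (hπ : Function.Surjective π)

open Classical in
/-- A set-theoretic section of `π` sending `1` to `1`. -/
noncomputable def sct : G → FreeGroup X := fun g =>
  if g = 1 then 1 else Function.surjInv hπ g

lemma sct_one : sct π hπ 1 = 1 := by simp [sct]

lemma π_sct (g : G) : π (sct π hπ g) = g := by
  unfold sct
  split
  · simp [*]
  · exact Function.surjInv_eq hπ g

/-- The class in the relation module of an element of `R = ker π`. -/
noncomputable def clOf (f : FreeGroup X) (h : f ∈ π.ker) :
    Additive (Abelianization ↥π.ker) :=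
  Additive.ofMul (Abelianization.of ⟨f, h⟩)

lemma clOf_congr {f₁ f₂ : FreeGroup X} (h : f₁ = f₂) (h₁ : f₁ ∈ π.ker) (h₂ : f₂ ∈ π.ker) :
    clOf π f₁ h₁ = clOf π f₂ h₂ := by subst h; rfl

lemma clOf_mul (f₁ f₂ : FreeGroup X) (h₁ : f₁ ∈ π.ker) (h₂ : f₂ ∈ π.ker) (h : f₁ * f₂ ∈ π.ker) :
    clOf π (f₁ * f₂) h = clOf π f₁ h₁ + clOf π f₂ h₂ := by
  unfold clOf
  rw [show (⟨f₁ * f₂, h⟩ : ↥π.ker) = ⟨f₁, h₁⟩ * ⟨f₂, h₂⟩ from rfl, map_mul]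
  rfl

lemma clOf_eq_add (f f₁ f₂ : FreeGroup X) (h : f ∈ π.ker) (h₁ : f₁ ∈ π.ker) (h₂ : f₂ ∈ π.ker)
    (heq : f = f₁ * f₂) : clOf π f h = clOf π f₁ h₁ + clOf π f₂ h₂ := by
  subst heq; exact clOf_mul π f₁ f₂ h₁ h₂ h

lemma clOf_one (h : (1 : FreeGroup X) ∈ π.ker) : clOf π 1 h = 0 := by
  unfold clOf
  rw [show (⟨(1 : FreeGroup X), h⟩ : ↥π.ker) = 1 from rfl, map_one]
  rfl

lemma clOf_add_eq_add (f₁ f₂ g₁ g₂ : FreeGroup X) (h₁ : f₁ ∈ π.ker) (h₂ : f₂ ∈ π.ker)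
    (k₁ : g₁ ∈ π.ker) (k₂ : g₂ ∈ π.ker) (heq : f₁ * f₂ = g₁ * g₂) :
    clOf π f₁ h₁ + clOf π f₂ h₂ = clOf π g₁ k₁ + clOf π g₂ k₂ := by
  rw [← clOf_mul π f₁ f₂ h₁ h₂ (mul_mem h₁ h₂), ← clOf_mul π g₁ g₂ k₁ k₂ (mul_mem k₁ k₂)]
  exact clOf_congr π heq _ _

lemma tau_mem (f : FreeGroup X) : f * (sct π hπ (π f))⁻¹ ∈ π.ker := by
  simp [MonoidHom.mem_ker, π_sct]

/-- The class in the relation module of `f · s(π f)⁻¹`. -/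
noncomputable def tauCl (f : FreeGroup X) : Additive (Abelianization ↥π.ker) :=
  clOf π (f * (sct π hπ (π f))⁻¹) (tau_mem π hπ f)

/-- Conjugation by `u ∈ F` on the relation module, additively. -/
noncomputable def conjA (u : FreeGroup X) :
    Additive (Abelianization ↥π.ker) →+ Additive (Abelianization ↥π.ker) :=
  MonoidHom.toAdditive (actF π u).toMonoidHom

lemma conjA_clOf (u w : FreeGroup X) (h : w ∈ π.ker) :
    conjA π u (clOf π w h) = clOf π (u * w * u⁻¹) ((MonoidHom.normal_ker π).conj_mem w h u) := by
  show Additive.ofMul ((actF π u) (Abelianization.of ⟨w, h⟩)) = _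
  have : (actF π u) (Abelianization.of ⟨w, h⟩) =
      Abelianization.of (MulAut.conjNormal u ⟨w, h⟩) := by
    exact abelianizationCongr_of _ _
  rw [this]
  apply congrArg
  apply congrArg
  apply Subtype.ext
  simp [MulAut.conjNormal_apply]

lemma rmAddHom_ext {β : Type} [AddZeroClass β]
    {f g : Additive (Abelianization ↥π.ker) →+ β}
    (h : ∀ (w : FreeGroup X) (hw : w ∈ π.ker), f (clOf π w hw) = g (clOf π w hw)) : f = g := by
  ext a
  show f (Additive.ofMul (Additive.toMul a)) = g (Additive.ofMul (Additive.toMul a))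
  induction (Additive.toMul a : Abelianization ↥π.ker) using QuotientGroup.induction_on with
  | _ z => exact h z z.2

lemma tauCl_mul (u v : FreeGroup X) :
    tauCl π hπ (u * v) = conjA π u (tauCl π hπ v) + tauCl π hπ (u * sct π hπ (π v)) := by
  unfold tauCl
  rw [conjA_clOf]
  apply clOf_eq_add
  simp only [map_mul, π_sct]
  group

end CrowellLyndonAux2


section CrowellLyndonAux3

variable (π : FreeGroup X →* G) (hπ : Function.Surjective π)

/-- The rewriting map `Ψ : ℤ[G]^(X) → R̄`, `e_x · g ↦ [s(g)·x·s(g·π(x))⁻¹]`. -/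
noncomputable def clPsi : (X →₀ MonoidAlgebra ℤ G) →+ Additive (Abelianization ↥π.ker) :=
  Finsupp.liftAddHom fun x =>
    ((Finsupp.liftAddHom fun g =>
        zmultiplesHom _ (tauCl π hπ (sct π hπ g * FreeGroup.of x))).comp
          (MonoidAlgebra.coeffAddEquiv : MonoidAlgebra ℤ G ≃+ (G →₀ ℤ)).toAddMonoidHom :
      MonoidAlgebra ℤ G →+ Additive (Abelianization ↥π.ker))

lemma clPsi_single (x : X) (g : G) (n : ℤ) :
    clPsi π hπ (Finsupp.single x (MonoidAlgebra.single g n)) =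
      n • tauCl π hπ (sct π hπ g * FreeGroup.of x) := by
  unfold clPsi
  rw [Finsupp.liftAddHom_apply_single]
  exact Finsupp.liftAddHom_apply_single _ g n

/-- `C_u : ℤ[G] → R̄`, `g ↦ [τ(u·s(g))]`. -/
noncomputable def clC (u : FreeGroup X) :
    MonoidAlgebra ℤ G →+ Additive (Abelianization ↥π.ker) :=
  (Finsupp.liftAddHom fun g => zmultiplesHom _ (tauCl π hπ (u * sct π hπ g))).comp
    (MonoidAlgebra.coeffAddEquiv : MonoidAlgebra ℤ G ≃+ (G →₀ ℤ)).toAddMonoidHom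

lemma clC_single (u : FreeGroup X) (g : G) (n : ℤ) :
    clC π hπ u (MonoidAlgebra.single g n) = n • tauCl π hπ (u * sct π hπ g) :=
  Finsupp.liftAddHom_apply_single _ g n

lemma clC_one (u : FreeGroup X) : clC π hπ u 1 = tauCl π hπ u := by
  rw [MonoidAlgebra.one_def, clC_single, one_smul]
  have h : u * sct π hπ 1 = u := by rw [sct_one, mul_one]
  rw [h]

/-- `E : ℤ[G] → ℤ[G]^(X)`, `g ↦ fox(s(g))`. -/
noncomputable def clE : MonoidAlgebra ℤ G →+ (X →₀ MonoidAlgebra ℤ G) :=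
  (Finsupp.liftAddHom fun g => zmultiplesHom _ (foxD π (sct π hπ g))).comp
    (MonoidAlgebra.coeffAddEquiv : MonoidAlgebra ℤ G ≃+ (G →₀ ℤ)).toAddMonoidHom

lemma clE_single (g : G) (n : ℤ) :
    clE π hπ (MonoidAlgebra.single g n) = n • foxD π (sct π hπ g) :=
  Finsupp.liftAddHom_apply_single _ g n

lemma dMap_single (x : X) (g : G) (n : ℤ) :
    dMap π (Finsupp.single x (MonoidAlgebra.single g n)) =
      MonoidAlgebra.single (g * π (FreeGroup.of x)) n - MonoidAlgebra.single g n := by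
  unfold dMap
  rw [Finsupp.linearCombination_single, smul_eq_mul, mul_sub, mul_one,
    MonoidAlgebra.of_apply, MonoidAlgebra.single_mul_single, mul_one]

lemma smul_single_basis (h : G) (x : X) (g : G) (n : ℤ) :
    MonoidAlgebra.of ℤ G h • Finsupp.single x (MonoidAlgebra.single g n) =
      Finsupp.single x (MonoidAlgebra.single (h * g) n) := by
  rw [Finsupp.smul_single]
  congr 1
  rw [MonoidAlgebra.of_apply, smul_eq_mul, MonoidAlgebra.single_mul_single, one_mul]

/-- Key identity: the rewriting map intertwines the `G`-actions up to a
`C`-correction measured by `dMap`. -/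
lemma key1 (u : FreeGroup X) (m : X →₀ MonoidAlgebra ℤ G) :
    conjA π u (clPsi π hπ m) + clC π hπ u (dMap π m) =
      clPsi π hπ (MonoidAlgebra.of ℤ G (π u) • m) := by
  induction m using Finsupp.induction_linear with
  | zero => simp
  | add f g hf hg =>
    rw [map_add, map_add, map_add, map_add, smul_add, map_add, ← hf, ← hg]
    abel
  | single x p =>
    induction p using MonoidAlgebra.induction_linear with
    | zero => simp
    | add f g hf hg =>
      rw [show Finsupp.single x (f + g) = Finsupp.single x f + Finsupp.single x g from
          Finsupp.single_add x f g,
        map_add, map_add, map_add, map_add, smul_add, map_add, ← hf, ← hg]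
      abel
    | single g n =>
      rw [clPsi_single, dMap_single, smul_single_basis, clPsi_single, map_sub, clC_single,
        clC_single, map_zsmul, ← smul_sub, ← smul_add]
      apply congrArg
      have h5 : conjA π u (tauCl π hπ (sct π hπ g * FreeGroup.of x))
            + tauCl π hπ (u * sct π hπ (g * π (FreeGroup.of x)))
          = tauCl π hπ (u * sct π hπ g)
            + tauCl π hπ (sct π hπ (π u * g) * FreeGroup.of x) := by
        unfold tauCl
        rw [conjA_clOf]
        apply clOf_add_eq_add
        simp only [map_mul, π_sct, mul_assoc]
        group
      rw [← add_sub_assoc, h5, add_sub_cancel_left]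

/-- The fundamental theorem: `Ψ` computes `τ` from the Fox derivative. -/
lemma clPsi_foxD (f : FreeGroup X) : clPsi π hπ (foxD π f) = tauCl π hπ f := by
  induction f using FreeGroup.induction_on with
  | C1 =>
    rw [foxD_one, map_zero]
    unfold tauCl
    have h : (1 : FreeGroup X) * (sct π hπ (π 1))⁻¹ = 1 := by
      rw [map_one, sct_one, inv_one, mul_one]
    rw [clOf_congr π h _ (by simp [MonoidHom.mem_ker]), clOf_one]
  | of x =>
    rw [foxD_of, show (1 : MonoidAlgebra ℤ G) = MonoidAlgebra.single 1 1 from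
      MonoidAlgebra.one_def, clPsi_single, one_smul]
    have h : sct π hπ 1 * FreeGroup.of x = FreeGroup.of x := by rw [sct_one, one_mul]
    rw [h]
  | inv_of x ih =>
    rw [foxD_inv, foxD_of,
      show (1 : MonoidAlgebra ℤ G) = MonoidAlgebra.single 1 1 from MonoidAlgebra.one_def,
      smul_single_basis, map_neg, clPsi_single, one_smul, mul_one,
      neg_eq_iff_add_eq_zero, add_comm]
    unfold tauCl
    rw [← clOf_mul π _ _ (tau_mem π hπ _) (tau_mem π hπ _)
      (mul_mem (tau_mem π hπ _) (tau_mem π hπ _))]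
    rw [clOf_congr π (f₂ := 1) ?heq _ (by simp [MonoidHom.mem_ker])]
    · exact clOf_one π _
    case heq =>
      simp only [map_mul, map_inv, π_sct, inv_mul_cancel, sct_one]
      group
  | mul u v ihu ihv =>
    rw [foxD_mul, map_add, ← key1, ihv, dMap_foxD, map_sub, clC_one,
      show MonoidAlgebra.of ℤ G (π v) = MonoidAlgebra.single (π v) 1 from rfl,
      clC_single, one_smul, ihu]
    conv_rhs => rw [tauCl_mul]
    abel

end CrowellLyndonAux3


section CrowellLyndonAux4

variable (π : FreeGroup X →* G) (hπ : Function.Surjective π)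

/-- The Fox derivative restricted to `R = ker π` is a homomorphism. -/
noncomputable def foxKer : ↥π.ker →* Multiplicative (X →₀ MonoidAlgebra ℤ G) where
  toFun r := Multiplicative.ofAdd (foxD π ↑r)
  map_one' := by
    show Multiplicative.ofAdd (foxD π 1) = 1
    rw [foxD_one]
    rfl
  map_mul' r s := by
    have h1 : π (r : FreeGroup X) = 1 := r.2
    show Multiplicative.ofAdd (foxD π (↑r * ↑s)) = _
    rw [foxD_mul, h1, map_one, one_smul]
    rfl

/-- The Fox derivative map `R̄ → ℤ[G]^(X)` as an additive homomorphism. -/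
noncomputable def thetaAdd : Additive (Abelianization ↥π.ker) →+ (X →₀ MonoidAlgebra ℤ G) :=
  MonoidHom.toAdditiveLeft (Abelianization.lift (foxKer π))

lemma thetaAdd_clOf (w : FreeGroup X) (h : w ∈ π.ker) :
    thetaAdd π (clOf π w h) = foxD π w := by
  show Multiplicative.toAdd ((Abelianization.lift (foxKer π)) (Abelianization.of ⟨w, h⟩)) = _
  rw [Abelianization.lift_apply_of]
  rfl

lemma tauCl_of_mem (w : FreeGroup X) (hw : w ∈ π.ker) : tauCl π hπ w = clOf π w hw := by
  unfold tauCl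
  apply clOf_congr
  rw [show π w = 1 from hw, sct_one, inv_one, mul_one]

lemma thetaAdd_conjA (u : FreeGroup X) (a : Additive (Abelianization ↥π.ker)) :
    thetaAdd π (conjA π u a) = MonoidAlgebra.of ℤ G (π u) • thetaAdd π a := by
  have h : (thetaAdd π).comp (conjA π u)
      = ((smulAddHom (MonoidAlgebra ℤ G) (X →₀ MonoidAlgebra ℤ G))
          (MonoidAlgebra.of ℤ G (π u))).comp (thetaAdd π) := by
    apply rmAddHom_ext
    intro w hw
    show thetaAdd π (conjA π u (clOf π w hw))
        = MonoidAlgebra.of ℤ G (π u) • thetaAdd π (clOf π w hw)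
    rw [conjA_clOf, thetaAdd_clOf, thetaAdd_clOf, foxD_conj π u w hw]
  exact DFunLike.congr_fun h a

lemma relRep_apply (u : FreeGroup X) (v : Additive (Abelianization ↥π.ker)) :
    (relRep π hπ) (π u) v = conjA π u v := by
  show Additive.ofMul ((actG π hπ (π u)) v.toMul) = Additive.ofMul ((actF π u) v.toMul)
  have h : actG π hπ (π u) = actF π u :=
    π.liftOfRightInverse_comp_apply _ (Function.rightInverse_surjInv hπ)
      ⟨actF π, ker_le_ker_actF π⟩ u
  rw [h]

lemma thetaAdd_asAlgebraHom (r : MonoidAlgebra ℤ G) (v : Additive (Abelianization ↥π.ker)) :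
    thetaAdd π ((relRep π hπ).asAlgebraHom r v) = r • thetaAdd π v := by
  induction r using MonoidAlgebra.induction_linear with
  | zero => simp
  | add f g hf hg => rw [map_add, LinearMap.add_apply, map_add, hf, hg, add_smul]
  | single g n =>
    rw [Representation.asAlgebraHom_single, LinearMap.smul_apply, map_zsmul]
    have hg : g = π (Function.surjInv hπ g) := (Function.rightInverse_surjInv hπ g).symm
    rw [hg, relRep_apply, thetaAdd_conjA, ← smul_assoc]
    congr 1
    rw [MonoidAlgebra.of_apply, MonoidAlgebra.smul_single]
    norm_num

/-- The Fox derivative map `R̄ → ℤ[G]^(X)` as a `ℤ[G]`-linear map. -/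
noncomputable def theta :
    (relRep π hπ).asModule →ₗ[MonoidAlgebra ℤ G] (X →₀ MonoidAlgebra ℤ G) where
  toFun a := thetaAdd π ((relRep π hπ).asModuleEquiv a)
  map_add' a b := by
    show thetaAdd π ((relRep π hπ).asModuleEquiv (a + b)) = _
    rw [map_add, map_add]
  map_smul' r a := by
    show thetaAdd π ((relRep π hπ).asModuleEquiv (r • a))
        = r • thetaAdd π ((relRep π hπ).asModuleEquiv a)
    rw [Representation.asModuleEquiv_map_smul, thetaAdd_asAlgebraHom]

lemma clPsi_thetaAdd (v : Additive (Abelianization ↥π.ker)) :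
    clPsi π hπ (thetaAdd π v) = v := by
  have h : (clPsi π hπ).comp (thetaAdd π) = AddMonoidHom.id _ := by
    apply rmAddHom_ext
    intro w hw
    show clPsi π hπ (thetaAdd π (clOf π w hw)) = clOf π w hw
    rw [thetaAdd_clOf, clPsi_foxD, tauCl_of_mem]
  exact DFunLike.congr_fun h v

lemma dMap_thetaAdd (v : Additive (Abelianization ↥π.ker)) :
    dMap π (thetaAdd π v) = 0 := by
  have h : (dMap π).toAddMonoidHom.comp (thetaAdd π) = 0 := by
    apply rmAddHom_ext
    intro w hw
    show dMap π (thetaAdd π (clOf π w hw)) = 0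
    rw [thetaAdd_clOf, dMap_foxD, show π w = 1 from hw, map_one, sub_self]
  exact DFunLike.congr_fun h v

/-- Second key identity: `θ ∘ Ψ` is the identity modulo `E ∘ dMap`. -/
lemma key2 (m : X →₀ MonoidAlgebra ℤ G) :
    thetaAdd π (clPsi π hπ m) + clE π hπ (dMap π m) = m := by
  induction m using Finsupp.induction_linear with
  | zero => simp
  | add f g hf hg =>
    rw [map_add, map_add, map_add, map_add]
    conv_rhs => rw [← hf, ← hg]
    abel
  | single x p =>
    induction p using MonoidAlgebra.induction_linear with
    | zero => simp
    | add f g hf hg =>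
      rw [Finsupp.single_add, map_add, map_add, map_add, map_add]
      conv_rhs => rw [← hf, ← hg]
      abel
    | single g n =>
      rw [clPsi_single, dMap_single, map_sub, clE_single, clE_single, map_zsmul]
      have h6 : thetaAdd π (tauCl π hπ (sct π hπ g * FreeGroup.of x))
          = Finsupp.single x (MonoidAlgebra.single g 1) + foxD π (sct π hπ g)
            - foxD π (sct π hπ (g * π (FreeGroup.of x))) := by
        unfold tauCl
        rw [thetaAdd_clOf, foxD_mul, foxD_mul, foxD_inv, foxD_of, map_mul, π_sct, π_sct,
          smul_neg, smul_smul, ← map_mul, mul_inv_cancel, map_one, one_smul,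
          show (1 : MonoidAlgebra ℤ G) = MonoidAlgebra.single 1 1 from MonoidAlgebra.one_def,
          smul_single_basis, mul_one]
        abel
      rw [h6]
      rw [show Finsupp.single x (MonoidAlgebra.single g n)
          = n • Finsupp.single x (MonoidAlgebra.single g 1) by
        rw [Finsupp.smul_single, MonoidAlgebra.smul_single]
        norm_num]
      module

end CrowellLyndonAux4


theorem crowell_lyndon [Finite X] (π : FreeGroup X →* G) (hπ : Function.Surjective π) :
    -- the image of `ℤ[G]^(X) → ℤ[G]` is exactly the augmentation ideal `IG`, and
    LinearMap.range (dMap π) = RingHom.ker (aug G) ∧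
    -- there is an injective `ℤ[G]`-linear map `θ : R̄ → ℤ[G]^(X)` with image
    -- `ker (ℤ[G]^(X) → IG)`, induced by Fox calculus:
    ∃ θ : (relRep π hπ).asModule →ₗ[MonoidAlgebra ℤ G] (X →₀ MonoidAlgebra ℤ G),
      Function.Injective θ ∧
      LinearMap.range θ = LinearMap.ker (dMap π) ∧
      ∃ fox : FreeGroup X → (X →₀ MonoidAlgebra ℤ G),
        (∀ x : X, fox (FreeGroup.of x) = Finsupp.single x 1) ∧
        (∀ u v : FreeGroup X,
          fox (u * v) = fox u + (MonoidAlgebra.of ℤ G (π u)) • fox v) ∧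
        (∀ (r : FreeGroup X) (hr : r ∈ π.ker),
          θ ((relRep π hπ).asModuleEquiv.symm
              (Additive.ofMul (Abelianization.of (⟨r, hr⟩ : ↥π.ker)))) = fox r) := by
  
  constructor
  · -- the image of `dMap` is the augmentation ideal
    apply le_antisymm
    · rw [dMap, Finsupp.range_linearCombination, Submodule.span_le]
      rintro _ ⟨x, rfl⟩
      simp only [SetLike.mem_coe]
      simp [RingHom.mem_ker, aug, MonoidAlgebra.lift_of]
    · intro a ha
      have key : ∀ b : MonoidAlgebra ℤ G,
          b - (aug G b) • (1 : MonoidAlgebra ℤ G) ∈ LinearMap.range (dMap π) := by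
        intro b
        induction b using MonoidAlgebra.induction_on with
        | of g =>
          refine ⟨foxD π (Function.surjInv hπ g), ?_⟩
          rw [dMap_foxD, Function.rightInverse_surjInv hπ g]
          have ha : aug G (MonoidAlgebra.of ℤ G g) = 1 := by
            rw [aug, MonoidAlgebra.lift_of]
            rfl
          rw [ha, one_smul]
        | add f g hf hg =>
          have h : f + g - aug G (f + g) • (1 : MonoidAlgebra ℤ G)
              = (f - aug G f • 1) + (g - aug G g • 1) := by
            rw [map_add, add_smul]
            abel
          rw [h]
          exact add_mem hf hg
        | smul r f hf =>
          have h : r • f - aug G (r • f) • (1 : MonoidAlgebra ℤ G)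
              = r • (f - aug G f • 1) := by
            rw [map_zsmul, smul_sub, smul_smul, smul_eq_mul]
          rw [h]
          exact Submodule.smul_of_tower_mem _ r hf
      have h0 : aug G a = 0 := by rwa [RingHom.mem_ker] at ha
      have h1 := key a
      rwa [h0, zero_smul, sub_zero] at h1
  · refine ⟨theta π hπ, ?_, ?_, fun f => foxD π f, fun x => foxD_of π x,
      fun u v => foxD_mul π u v, fun r hr => ?_⟩
    · -- injectivity
      have key : ∀ a : (relRep π hπ).asModule,
          (relRep π hπ).asModuleEquiv.symm (clPsi π hπ (theta π hπ a)) = a := by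
        intro a
        rw [show theta π hπ a = thetaAdd π ((relRep π hπ).asModuleEquiv a) from rfl,
          clPsi_thetaAdd]
        exact LinearEquiv.symm_apply_apply _ _
      intro a b hab
      rw [← key a, ← key b, hab]
    · -- range
      apply le_antisymm
      · rintro _ ⟨a, rfl⟩
        rw [LinearMap.mem_ker,
          show theta π hπ a = thetaAdd π ((relRep π hπ).asModuleEquiv a) from rfl,
          dMap_thetaAdd]
      · intro m hm
        refine ⟨(relRep π hπ).asModuleEquiv.symm (clPsi π hπ m), ?_⟩
        rw [show theta π hπ ((relRep π hπ).asModuleEquiv.symm (clPsi π hπ m))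
            = thetaAdd π ((relRep π hπ).asModuleEquiv
                ((relRep π hπ).asModuleEquiv.symm (clPsi π hπ m))) from rfl,
          LinearEquiv.apply_symm_apply]
        have h := key2 π hπ m
        rw [LinearMap.mem_ker] at hm
        rwa [hm, map_zero, add_zero] at h
    · -- Fox calculus computes `θ` on the relation module
      rw [show theta π hπ ((relRep π hπ).asModuleEquiv.symm
            (Additive.ofMul (Abelianization.of (⟨r, hr⟩ : ↥π.ker))))
          = thetaAdd π ((relRep π hπ).asModuleEquiv ((relRep π hπ).asModuleEquiv.symm
              (Additive.ofMul (Abelianization.of (⟨r, hr⟩ : ↥π.ker))))) from rfl,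
        LinearEquiv.apply_symm_apply]
      exact thetaAdd_clOf π r hr
end
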